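/- Let C ⊆ ℝ^d be a finite set in general position with |C| ≤ d+1 and 0 ∈ conv(C), and let π : ℝ^d → ℝ^d denote the orthogonal projection onto the orthogonal complement lsp(C)^⊥ of lsp(C). Let Q ⊆ ℝ^d be a finite set such that 0 ∈ conv(π(Q)). Then there exists a point c ∈ C such that 0 ∈ conv(Q ∪ (C \ {c})). -/

import Mathlib

/-- A finite set `P ⊆ ℝ^d` is in *general position* if for every `k ≤ d` no
`k + 2` of its points lie in a `k`-dimensional affine subspace, and no proper
subset of `P` contains the origin in its convex hull. -/
def GenPos {d : ℕ} (P : Finset (EuclideanSpace ℝ (Fin d))) : Prop :=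
  (∀ k : ℕ, k ≤ d → ∀ S ⊆ P, S.card = k + 2 →
    ¬ ∃ A : AffineSubspace ℝ (EuclideanSpace ℝ (Fin d)),
        Module.finrank ℝ A.direction = k ∧
        (S : Set (EuclideanSpace ℝ (Fin d))) ⊆ (A : Set (EuclideanSpace ℝ (Fin d)))) ∧
  (∀ S ⊂ P, (0 : EuclideanSpace ℝ (Fin d)) ∉
    convexHull ℝ (S : Set (EuclideanSpace ℝ (Fin d))))

/-- Let `C ⊆ ℝ^d` be in general position with `|C| ≤ d + 1` and `0 ∈ conv C`,
and let `Q ⊆ ℝ^d` be a finite set whose orthogonal projection onto the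
orthogonal complement of the linear span of `C` contains the origin in its
convex hull. Then some point `c ∈ C` can be replaced by `Q`:
`0 ∈ conv (Q ∪ (C \ {c}))`. -/
theorem dimension_reduction (d : ℕ)
    (C : Finset (EuclideanSpace ℝ (Fin d))) (hgp : GenPos C)
    (hcard : C.card ≤ d + 1)
    (h0 : (0 : EuclideanSpace ℝ (Fin d)) ∈
      convexHull ℝ ((C : Set (EuclideanSpace ℝ (Fin d)))))
    (Q : Finset (EuclideanSpace ℝ (Fin d)))
    (hQ : (0 : EuclideanSpace ℝ (Fin d)) ∈
      convexHull ℝ ((fun x : EuclideanSpace ℝ (Fin d) =>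
          ((Submodule.orthogonalProjectionOnto
            ((Submodule.span ℝ ((C : Set (EuclideanSpace ℝ (Fin d)))))ᗮ) x :
            EuclideanSpace ℝ (Fin d)))) '' (Q : Set (EuclideanSpace ℝ (Fin d))))) :
    ∃ c ∈ C, (0 : EuclideanSpace ℝ (Fin d)) ∈
      convexHull ℝ ((Q : Set (EuclideanSpace ℝ (Fin d))) ∪
        ((C : Set (EuclideanSpace ℝ (Fin d))) \ {c})) := by
  classical
  set U : Submodule ℝ (EuclideanSpace ℝ (Fin d)) := (Submodule.span ℝ ((C : Set (EuclideanSpace ℝ (Fin d)))))ᗮ with hU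
  -- C is nonempty
  have hCne : C.Nonempty := by
    rw [Finset.nonempty_iff_ne_empty]
    rintro rfl
    simp at h0
  -- the projection as an affine map
  let L : (EuclideanSpace ℝ (Fin d)) →ₗ[ℝ] (EuclideanSpace ℝ (Fin d)) := U.subtype ∘ₗ (Submodule.orthogonalProjectionOnto U).toLinearMap
  have hLim : (fun x : (EuclideanSpace ℝ (Fin d)) => ((Submodule.orthogonalProjectionOnto U x : (EuclideanSpace ℝ (Fin d))))) '' (Q : Set (EuclideanSpace ℝ (Fin d)))
      = ⇑L.toAffineMap '' (Q : Set (EuclideanSpace ℝ (Fin d))) := rfl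
  rw [hLim, ← AffineMap.image_convexHull] at hQ
  obtain ⟨v, hvQ, hv0⟩ := hQ
  -- v lies in the span of C
  have hvspan : v ∈ Submodule.span ℝ ((C : Set (EuclideanSpace ℝ (Fin d)))) := by
    have : Submodule.orthogonalProjectionOnto U v = 0 := by
      have : (Submodule.orthogonalProjectionOnto U v : (EuclideanSpace ℝ (Fin d))) = 0 := hv0
      exact Subtype.coe_injective this
    have hvU : v ∈ Uᗮ := Submodule.orthogonalProjectionOnto_eq_zero_iff.mp this
    rwa [hU, Submodule.orthogonal_orthogonal] at hvU
  obtain ⟨α, -, hα⟩ := Submodule.mem_span_finset.mp hvspan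
  -- convex combination for 0 ∈ conv C
  rw [Finset.convexHull_eq] at h0
  obtain ⟨μ, hμ0, hμ1, hμc⟩ := h0
  have hμsum : ∑ c ∈ C, μ c • c = 0 := by
    rw [Finset.centerMass_eq_of_sum_1 _ _ hμ1] at hμc
    simpa using hμc
  -- all μ are positive
  have hμpos : ∀ c ∈ C, 0 < μ c := by
    intro c hc
    rcases lt_or_eq_of_le (hμ0 c hc) with h | h
    · exact h
    · exfalso
      apply hgp.2 (C.erase c) (Finset.erase_ssubset hc)
      have h1 : ∑ y ∈ C.erase c, μ y = 1 := by
        rw [Finset.sum_erase _ (by rw [← h])]; exact hμ1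
      have h2 : (C.erase c).centerMass μ id = 0 := by
        rw [Finset.centerMass_eq_of_sum_1 _ _ h1]
        have : ∑ y ∈ C.erase c, μ y • (id y : (EuclideanSpace ℝ (Fin d))) = ∑ y ∈ C, μ y • y := by
          apply Finset.sum_erase
          rw [← h]; simp
        rw [this, hμsum]
      rw [Finset.convexHull_eq]
      exact ⟨μ, fun y hy => hμ0 y (Finset.mem_of_mem_erase hy), h1, h2⟩
  -- choose maximizer of α c / μ c
  obtain ⟨c₀, hc₀C, hc₀max⟩ := C.exists_max_image (fun c => α c / μ c) hCne
  refine ⟨c₀, hc₀C, ?_⟩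
  set t : ℝ := α c₀ / μ c₀ with ht
  set β : (EuclideanSpace ℝ (Fin d)) → ℝ := fun c => t * μ c - α c with hβ
  have hβnn : ∀ c ∈ C, 0 ≤ β c := by
    intro c hc
    have := hc₀max c hc
    have hμ := hμpos c hc
    rw [div_le_iff₀ hμ] at this
    simp only [hβ]
    nlinarith
  have hβc₀ : β c₀ = 0 := by
    simp only [hβ, ht]
    rw [div_mul_cancel₀ _ (ne_of_gt (hμpos c₀ hc₀C))]
    ring
  have hsumβ : ∑ c ∈ C, β c • c = -v := by
    have : ∑ c ∈ C, β c • c = t • (∑ c ∈ C, μ c • c) - ∑ c ∈ C, α c • c := by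
      rw [Finset.smul_sum, ← Finset.sum_sub_distrib]
      congr 1; ext c
      simp only [hβ]
      rw [sub_smul, smul_smul]
    rw [this, hμsum, hα, smul_zero, zero_sub]
  have hsumβ' : ∑ c ∈ C.erase c₀, β c • c = -v := by
    rw [Finset.sum_erase _ (by rw [hβc₀]; simp)]; exact hsumβ
  set S : ℝ := ∑ c ∈ C.erase c₀, β c with hS
  have hSnn : 0 ≤ S :=
    Finset.sum_nonneg fun c hc => hβnn c (Finset.mem_of_mem_erase hc)
  have hvmem : v ∈ convexHull ℝ ((Q : Set (EuclideanSpace ℝ (Fin d))) ∪ ((C : Set (EuclideanSpace ℝ (Fin d))) \ {c₀})) :=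
    convexHull_mono Set.subset_union_left hvQ
  rcases eq_or_lt_of_le hSnn with hS0 | hSpos
  · -- S = 0: all β zero, so v = 0
    have hall : ∀ c ∈ C.erase c₀, β c = 0 := by
      intro c hc
      exact (Finset.sum_eq_zero_iff_of_nonneg
        (fun c hc => hβnn c (Finset.mem_of_mem_erase hc))).mp hS0.symm c hc
    have : (0 : (EuclideanSpace ℝ (Fin d))) = -v := by
      rw [← hsumβ']
      exact (Finset.sum_eq_zero (fun c hc => by rw [hall c hc, zero_smul])).symm
    have hv : v = 0 := by simpa using this.symm
    rwa [hv] at hvmem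
  · -- S > 0
    have hm : (C.erase c₀).centerMass β id ∈ convexHull ℝ ((C : Set (EuclideanSpace ℝ (Fin d))) \ {c₀}) := by
      have := Finset.centerMass_mem_convexHull (C.erase c₀)
        (fun c hc => hβnn c (Finset.mem_of_mem_erase hc)) (by rwa [← hS])
        (fun c hc => Finset.mem_coe.mpr hc)
      rwa [Finset.coe_erase] at this
    have hmmem : (C.erase c₀).centerMass β id ∈
        convexHull ℝ ((Q : Set (EuclideanSpace ℝ (Fin d))) ∪ ((C : Set (EuclideanSpace ℝ (Fin d))) \ {c₀})) :=
      convexHull_mono Set.subset_union_right hm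
    have hcm : (C.erase c₀).centerMass β id = S⁻¹ • (-v) := by
      rw [Finset.centerMass, ← hS]
      simp only [id_eq]
      rw [hsumβ']
    have key : (0 : (EuclideanSpace ℝ (Fin d))) = (1 / (1 + S)) • v
        + (S / (1 + S)) • ((C.erase c₀).centerMass β id) := by
      have hSne : S ≠ 0 := ne_of_gt hSpos
      have h2 : S / (1 + S) * S⁻¹ = 1 / (1 + S) := by
        field_simp
      rw [hcm, smul_smul, smul_neg, h2]
      simp
    rw [key]
    have hT : (0:ℝ) < 1 + S := by linarith
    exact (convex_convexHull ℝ _) hvmem hmmem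
      (by positivity) (by positivity)
      (by field_simp)
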